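/- Let λ > 1, P(r,a) := r² − λ a + 1, r̃ := 1/√(λ−1) and ã := 1/(λ−1), and let A be the Jacobian matrix at (r̃, ã) of the vector field V(r,a) := ( P(r,a), −(a/r) P(r,a) − a/r² + 1 ) defined for r > 0. Then trace(A) = (λ+2)/√(λ−1) − λ + 1 and det(A) = 2 (λ−1)^{3/2}; in particular det(A) > 0. -/

import Mathlib

open Real

/-- For `λ > 1`, `P(r,a) = r² − λa + 1`, at the steady state
`(r̃, ã) = (1/√(λ−1), 1/(λ−1))` the Jacobian `A` of
`V(r,a) = (P(r,a), −(a/r)P(r,a) − a/r² + 1)` has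
`trace(A) = (λ+2)/√(λ−1) − λ + 1` and `det(A) = 2(λ−1)^{3/2} > 0`. -/
theorem jacobian_trace_det_at_steady_state
    (lam : ℝ) (hlam : 1 < lam)
    (P : ℝ × ℝ → ℝ) (hP : ∀ x : ℝ × ℝ, P x = x.1^2 - lam*x.2 + 1)
    (r0 a0 : ℝ) (hr0 : r0 = 1/Real.sqrt (lam - 1)) (ha0 : a0 = 1/(lam - 1))
    (V : ℝ × ℝ → ℝ × ℝ)
    (hV : ∀ x : ℝ × ℝ, V x = (P x, -(x.2/x.1) * P x - x.2/x.1^2 + 1)) :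
    ∃ A : ℝ × ℝ →L[ℝ] ℝ × ℝ, HasFDerivAt V A (r0, a0) ∧
      (A (1, 0)).1 + (A (0, 1)).2 = (lam + 2)/Real.sqrt (lam - 1) - lam + 1 ∧
      (A (1, 0)).1 * (A (0, 1)).2 - (A (0, 1)).1 * (A (1, 0)).2
        = 2*(lam - 1) ^ ((3:ℝ)/2) ∧
      0 < (A (1, 0)).1 * (A (0, 1)).2 - (A (0, 1)).1 * (A (1, 0)).2 := by
  have hlam0 : (0:ℝ) < lam - 1 := by linarith
  have hs : 0 < Real.sqrt (lam - 1) := Real.sqrt_pos.2 hlam0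
  have hs2 : Real.sqrt (lam - 1) ^ 2 = lam - 1 := Real.sq_sqrt hlam0.le
  have hr0pos : 0 < r0 := by rw [hr0]; positivity
  have h32 : (lam - 1) ^ ((3:ℝ)/2) = Real.sqrt (lam - 1) ^ 3 := by
    rw [Real.sqrt_eq_rpow, ← Real.rpow_natCast ((lam-1) ^ ((1:ℝ)/2)) 3,
      ← Real.rpow_mul hlam0.le]
    norm_num
  have hne : ((r0, a0) : ℝ × ℝ).1 ≠ 0 := ne_of_gt hr0pos
  have hne2 : ((r0, a0) : ℝ × ℝ).1 * ((r0, a0) : ℝ × ℝ).1 ≠ 0 := mul_ne_zero hne hne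
  have hfst : HasFDerivAt (fun x : ℝ × ℝ => x.1) (ContinuousLinearMap.fst ℝ ℝ ℝ) (r0, a0) :=
    hasFDerivAt_fst
  have hsnd : HasFDerivAt (fun x : ℝ × ℝ => x.2) (ContinuousLinearMap.snd ℝ ℝ ℝ) (r0, a0) :=
    hasFDerivAt_snd
  have h1 := ((hfst.mul hfst).sub (hsnd.const_mul lam)).add_const 1
  have hinvr : HasFDerivAt (fun x : ℝ × ℝ => (x.1)⁻¹) _ (r0, a0) :=
    (hasFDerivAt_inv hne).comp (r0, a0) hfst
  have hinvr2 : HasFDerivAt (fun x : ℝ × ℝ => (x.1 * x.1)⁻¹) _ (r0, a0) :=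
    (hasFDerivAt_inv hne2).comp (r0, a0) (hfst.mul hfst)
  have h2 := (((hsnd.mul hinvr).neg.mul h1).sub (hsnd.mul hinvr2)).add_const 1
  have hVf : V = fun x : ℝ × ℝ =>
      ((fun x : ℝ × ℝ => x.1 * x.1 - lam * x.2 + 1) x,
       (fun x : ℝ × ℝ =>
         -(x.2 * (x.1)⁻¹) * (x.1 * x.1 - lam * x.2 + 1) - x.2 * (x.1 * x.1)⁻¹ + 1) x) := by
    funext x
    rw [hV, hP]
    simp only [div_eq_mul_inv, sq]
  refine ⟨_, hVf ▸ (h1.prodMk h2), ?_, ?_, ?_⟩ <;>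
    simp only [ContinuousLinearMap.prod_apply, ContinuousLinearMap.coe_sub',
      ContinuousLinearMap.add_apply, ContinuousLinearMap.coe_fst',
      ContinuousLinearMap.coe_snd', ContinuousLinearMap.smul_apply, Pi.sub_apply,
      ContinuousLinearMap.neg_apply, ContinuousLinearMap.coe_smul', Pi.smul_apply,
      smul_eq_mul, ContinuousLinearMap.sub_apply, ContinuousLinearMap.zero_apply,
      ContinuousLinearMap.coe_comp', Function.comp_apply, ContinuousLinearMap.smulRight_apply,
      ContinuousLinearMap.one_apply, mul_one, mul_zero, zero_mul, add_zero, zero_add, sub_zero,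
      zero_sub, neg_zero, neg_neg, ContinuousLinearMap.toSpanSingleton_apply, Pi.mul_apply,
      Pi.neg_apply]
  · rw [hr0, ha0]
    set s := Real.sqrt (lam - 1) with hsdef
    have hl : lam = s^2 + 1 := by rw [hs2]; ring
    rw [hl]
    field_simp
    ring
  · rw [hr0, ha0, h32]
    set s := Real.sqrt (lam - 1) with hsdef
    have hl : lam = s^2 + 1 := by rw [hs2]; ring
    rw [hl]
    field_simp
    ring
  · rw [hr0, ha0]
    set s := Real.sqrt (lam - 1) with hsdef
    have hl : lam = s^2 + 1 := by rw [hs2]; ring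
    rw [hl]
    have hgt : (0:ℝ) < 2 * s^3 := by positivity
    convert hgt using 1
    field_simp
    ring
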